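/- Let K ≥ 2 and t ≥ 2 be integers and set N = q = (K−1)t(t+1). Then there exists a set B ⊆ S_{N,N} such that d₁(x,y) ≥ t+1 for all distinct x, y ∈ B, and |B| ≥ (K−1)·C(N−1, t) + 1, where C(N−1,t) = C((K−1)t(t+1)−1, t) is the ordinary binomial coefficient. -/
import Mathlib


/-- The discrete simplex `S_{q,N}`: tuples of naturals of length `q` summing to `N`. -/
def simplex (q N : ℕ) : Finset (Fin q → ℕ) := Finset.Nat.antidiagonalTuple q N

/-- The ℓ₁ distance `d₁(x,y) = (1/2) ∑ i, |x i − y i|` on the discrete simplex (the sum of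
absolute differences is even for tuples with equal sums, so division by 2 is exact). -/
def d1 {q : ℕ} (x y : Fin q → ℕ) : ℕ := (∑ i, ((x i : ℤ) - (y i : ℤ)).natAbs) / 2

/-- for integers `K ≥ 2`, `t ≥ 2` and `N = q = (K−1)t(t+1)`, there exists an
ℓ₁ code `B ⊆ S_{N,N}` with minimum distance `≥ t+1` and size
`|B| ≥ (K−1)·C((K−1)t(t+1)−1, t) + 1`. -/
lemma dist_lemma {q t : ℕ} (x y : Fin q → ℕ) (hsum : ∑ i, x i = ∑ i, y i)
    (hx : ∀ i, (t + 1) ∣ x i) (hy : ∀ i, (t + 1) ∣ y i) (hne : x ≠ y) :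
    t + 1 ≤ d1 x y := by
  obtain ⟨i, hi⟩ := Function.ne_iff.mp hne
  have hj : ∃ j, j ≠ i ∧ x j ≠ y j := by
    by_contra h
    push_neg at h
    apply hi
    have h1 : ∑ j ∈ Finset.univ.erase i, x j = ∑ j ∈ Finset.univ.erase i, y j :=
      Finset.sum_congr rfl fun j hj => h j (Finset.ne_of_mem_erase hj)
    have h2 := Finset.add_sum_erase Finset.univ x (Finset.mem_univ i)
    have h3 := Finset.add_sum_erase Finset.univ y (Finset.mem_univ i)
    omega
  obtain ⟨j, hji, hjne⟩ := hj
  have key : ∀ k, x k ≠ y k → t + 1 ≤ ((x k : ℤ) - (y k : ℤ)).natAbs := by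
    intro k hk
    have hpos : 0 < ((x k : ℤ) - (y k : ℤ)).natAbs := by
      rw [Int.natAbs_pos, sub_ne_zero]
      exact_mod_cast hk
    have hdvd : (t + 1) ∣ ((x k : ℤ) - (y k : ℤ)).natAbs := by
      have : ((t + 1 : ℕ) : ℤ) ∣ ((x k : ℤ) - (y k : ℤ)) :=
        dvd_sub (Int.natCast_dvd_natCast.mpr (hx k)) (Int.natCast_dvd_natCast.mpr (hy k))
      have h2 := Int.natAbs_dvd_natAbs.mpr this
      rwa [Int.natAbs_natCast] at h2
    exact Nat.le_of_dvd hpos hdvd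
  have hsub : ({i, j} : Finset (Fin q)) ⊆ Finset.univ := Finset.subset_univ _
  have hsum2 : ∑ k ∈ ({i, j} : Finset (Fin q)), ((x k : ℤ) - (y k : ℤ)).natAbs
      ≤ ∑ k, ((x k : ℤ) - (y k : ℤ)).natAbs :=
    Finset.sum_le_sum_of_subset hsub
  rw [Finset.sum_pair (Ne.symm hji)] at hsum2
  have h1 := key i hi
  have h2 := key j hjne
  unfold d1
  omega

/-- tail part of the code word associated to `(j, S)`. -/
def gfun (t n j : ℕ) (S : Finset (Fin n)) : Fin n → ℕ := fun k =>
  if hS : S.Nonempty then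
    (if k = S.min' hS then (j + 1) * (t + 1) else if k ∈ S then t + 1 else 0)
  else 0

/-- the code word associated to `(j, S)`. -/
def ffun (m t n j : ℕ) (S : Finset (Fin n)) : Fin (n + 1) → ℕ :=
  Fin.cons ((m * t - (t + j)) * (t + 1)) (gfun t n j S)

lemma gfun_support {t n j : ℕ} {S : Finset (Fin n)} (hS : S.Nonempty) (k : Fin n) :
    k ∈ S ↔ gfun t n j S k ≠ 0 := by
  unfold gfun
  rw [dif_pos hS]
  constructor
  · intro hk
    by_cases hmin : k = S.min' hS
    · rw [if_pos hmin]; positivity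
    · rw [if_neg hmin, if_pos hk]; omega
  · intro hne
    by_contra hk
    have hmin : k ≠ S.min' hS := fun h => hk (h ▸ S.min'_mem hS)
    rw [if_neg hmin, if_neg hk] at hne
    exact hne rfl

lemma gfun_sum {t n j : ℕ} {S : Finset (Fin n)} (hS : S.Nonempty) (hcard : S.card = t) :
    ∑ k, gfun t n j S k = (j + t) * (t + 1) := by
  have ht : 1 ≤ t := by
    rw [← hcard]; exact Finset.card_pos.mpr hS
  have hzero : ∀ k ∈ Finset.univ, k ∉ S → gfun t n j S k = 0 := by
    intro k _ hk
    unfold gfun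
    rw [dif_pos hS, if_neg (fun h : k = S.min' hS => hk (h ▸ S.min'_mem hS)), if_neg hk]
  rw [← Finset.sum_subset (Finset.subset_univ S) hzero]
  rw [← Finset.add_sum_erase S _ (S.min'_mem hS)]
  have hmin : gfun t n j S (S.min' hS) = (j + 1) * (t + 1) := by
    unfold gfun; rw [dif_pos hS, if_pos rfl]
  have hrest : ∀ k ∈ S.erase (S.min' hS), gfun t n j S k = t + 1 := by
    intro k hk
    obtain ⟨hne, hmem⟩ := Finset.mem_erase.mp hk
    unfold gfun
    rw [dif_pos hS, if_neg hne, if_pos hmem]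
  rw [Finset.sum_congr rfl hrest, Finset.sum_const, Finset.card_erase_of_mem (S.min'_mem hS),
    hcard, hmin, smul_eq_mul]
  have h1 : j + t = (j + 1) + (t - 1) := by omega
  rw [h1]; ring

lemma ffun_sum {m t n j : ℕ} {S : Finset (Fin n)} (hS : S.Nonempty) (hcard : S.card = t)
    (hj : t + j ≤ m * t) :
    ∑ i, ffun m t n j S i = m * t * (t + 1) := by
  unfold ffun
  rw [Fin.sum_cons, gfun_sum hS hcard, ← add_mul]
  congr 1
  omega

lemma ffun_dvd {m t n j : ℕ} {S : Finset (Fin n)} (i : Fin (n + 1)) :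
    (t + 1) ∣ ffun m t n j S i := by
  unfold ffun
  refine Fin.cases ?_ ?_ i
  · rw [Fin.cons_zero]; exact Dvd.intro_left _ rfl
  · intro k
    rw [Fin.cons_succ]
    unfold gfun
    split_ifs <;> simp

lemma ffun_inj {m t n : ℕ} {j j' : ℕ} {S S' : Finset (Fin n)}
    (hS : S.Nonempty) (hS' : S'.Nonempty)
    (hj : t + j ≤ m * t) (hj' : t + j' ≤ m * t)
    (heq : ffun m t n j S = ffun m t n j' S') : j = j' ∧ S = S' := by
  have hSS : S = S' := by
    ext k
    rw [gfun_support (t := t) (j := j) hS k, gfun_support (t := t) (j := j') hS' k]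
    have := congrFun heq k.succ
    unfold ffun at this
    rw [Fin.cons_succ, Fin.cons_succ] at this
    rw [this]
  subst hSS
  refine ⟨?_, rfl⟩
  have h0 := congrFun heq 0
  unfold ffun at h0
  rw [Fin.cons_zero, Fin.cons_zero] at h0
  have := Nat.eq_of_mul_eq_mul_right (by omega : 0 < t + 1) h0
  omega

-- the extra code word: all mass on coordinate 0
def zfun (m t n : ℕ) : Fin (n + 1) → ℕ := Fin.cons (m * t * (t + 1)) (fun _ => 0)

lemma zfun_sum {m t n : ℕ} : ∑ i, zfun m t n i = m * t * (t + 1) := by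
  unfold zfun
  rw [Fin.sum_cons]
  simp

lemma zfun_dvd {m t n : ℕ} (i : Fin (n + 1)) : (t + 1) ∣ zfun m t n i := by
  unfold zfun
  refine Fin.cases ?_ ?_ i
  · rw [Fin.cons_zero]; exact Dvd.intro_left _ rfl
  · intro k; rw [Fin.cons_succ]; exact dvd_zero _

lemma zfun_ne_ffun {m t n j : ℕ} {S : Finset (Fin n)} (hS : S.Nonempty) :
    zfun m t n ≠ ffun m t n j S := by
  intro h
  have := congrFun h (S.min' hS).succ
  unfold zfun ffun at this
  rw [Fin.cons_succ, Fin.cons_succ] at this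
  unfold gfun at this
  rw [dif_pos hS, if_pos rfl] at this
  simp at this

theorem aux_code (m t n : ℕ) (hm : 1 ≤ m) (ht : 2 ≤ t) (hn : n + 1 = m * t * (t + 1)) :
    ∃ B : Finset (Fin (n + 1) → ℕ),
      (∀ x ∈ B, ∑ i, x i = n + 1) ∧
      (∀ x ∈ B, ∀ y ∈ B, x ≠ y → t + 1 ≤ d1 x y) ∧
      m * n.choose t + 1 ≤ B.card := by
  set P := (Finset.range m) ×ˢ (Finset.univ.powersetCard t : Finset (Finset (Fin n))) with hP
  set B := insert (zfun m t n) (P.image (fun p => ffun m t n p.1 p.2)) with hB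
  have hmemP : ∀ p ∈ P, p.1 < m ∧ p.2.card = t := by
    intro p hp
    rw [hP, Finset.mem_product] at hp
    obtain ⟨h1, h2⟩ := hp
    exact ⟨Finset.mem_range.mp h1, (Finset.mem_powersetCard.mp h2).2⟩
  have hjle : ∀ j < m, t + j ≤ m * t := by
    intro j hjm
    nlinarith
  have hSne : ∀ (S : Finset (Fin n)), S.card = t → S.Nonempty := by
    intro S hs; rw [← Finset.card_pos, hs]; omega
  have hprop : ∀ b ∈ B, (∑ i, b i = n + 1) ∧ ∀ i, (t + 1) ∣ b i := by
    intro b hb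
    rw [hB, Finset.mem_insert] at hb
    rcases hb with hb | hb
    · subst hb; exact ⟨by rw [zfun_sum, ← hn], zfun_dvd⟩
    · obtain ⟨p, hp, rfl⟩ := Finset.mem_image.mp hb
      obtain ⟨h1, h2⟩ := hmemP p hp
      exact ⟨by rw [ffun_sum (hSne _ h2) h2 (hjle _ h1), ← hn], ffun_dvd⟩
  refine ⟨B, fun x hx => (hprop x hx).1, ?_, ?_⟩
  · intro x hx y hy hxy
    exact dist_lemma x y (by rw [(hprop x hx).1, (hprop y hy).1]) (hprop x hx).2 (hprop y hy).2 hxy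
  · have hinj : Set.InjOn (fun p : ℕ × Finset (Fin n) => ffun m t n p.1 p.2) P := by
      intro p hp p' hp' heq
      obtain ⟨h1, h2⟩ := hmemP p (Finset.mem_coe.mp hp)
      obtain ⟨h1', h2'⟩ := hmemP p' (Finset.mem_coe.mp hp')
      obtain ⟨hj, hS⟩ := ffun_inj (hSne _ h2) (hSne _ h2') (hjle _ h1) (hjle _ h1') heq
      exact Prod.ext hj hS
    have hcard_img : (P.image (fun p => ffun m t n p.1 p.2)).card = m * n.choose t := by
      rw [Finset.card_image_of_injOn hinj, hP, Finset.card_product, Finset.card_range,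
        Finset.card_powersetCard, Finset.card_univ, Fintype.card_fin]
    have hz : zfun m t n ∉ P.image (fun p => ffun m t n p.1 p.2) := by
      intro hmem
      obtain ⟨p, hp, heq⟩ := Finset.mem_image.mp hmem
      exact zfun_ne_ffun (hSne _ (hmemP p hp).2) heq.symm
    rw [hB, Finset.card_insert_of_notMem hz, hcard_img]


theorem exists_l1_code (K t : ℕ) (hK : 2 ≤ K) (ht : 2 ≤ t) :
    ∃ B : Finset (Fin ((K - 1) * t * (t + 1)) → ℕ),
      (∀ x ∈ B, ∑ i, x i = (K - 1) * t * (t + 1)) ∧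
      (∀ x ∈ B, ∀ y ∈ B, x ≠ y → t + 1 ≤ d1 x y) ∧
      (K - 1) * Nat.choose ((K - 1) * t * (t + 1) - 1) t + 1 ≤ B.card := by
  have hpos : 0 < (K - 1) * t * (t + 1) :=
    Nat.mul_pos (Nat.mul_pos (by omega) (by omega)) (by omega)
  obtain ⟨n, hn⟩ : ∃ n, n + 1 = (K - 1) * t * (t + 1) :=
    ⟨(K - 1) * t * (t + 1) - 1, Nat.succ_pred_eq_of_pos hpos⟩
  rw [← hn]
  simp only [Nat.add_sub_cancel]
  exact aux_code (K - 1) t n (by omega) ht hn
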